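/- Define polynomial functions V_r^{(k)}(λ) of λ = (λ_1,…,λ_n) ∈ ℝⁿ for r = 1,…,n and k ≥ 1 by the recursion: V_r^{(1)} = ρ_r, V_{n+1}^{(k)} := 0, and V_r^{(k+1)} = − V_{r+1}^{(k)} + ρ_r V_1^{(k)}. Then every family {V_1^{(k)},…,V_n^{(k)}} satisfies the Stäckel separability conditions: for all k ≥ 1, all r = 1,…,n and all i = 1,…,n, ∂V_r^{(k)}/∂λ_i = −(∂ρ_r/∂λ_i) · ∂V_1^{(k)}/∂λ_i; that is, ∂_i V_r^{(k)} = v_r^i ∂_i V_1^{(k)} where v_r^i = −∂ρ_r/∂λ_i are the eigenvalues of the one-Casimir Killing tensors. -/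

import Mathlib

open Finset

/-- The Viète polynomial `ρ_r(λ)` (it vanishes for `r > n`). -/
noncomputable def viete (n : ℕ) (r : ℕ) (x : Fin n → ℝ) : ℝ :=
  (-1 : ℝ) ^ r * ∑ s ∈ Finset.powersetCard r (Finset.univ : Finset (Fin n)),
    ∏ j ∈ s, x j

/-- The generic separable potentials `V_r^{(k)}` of the one-Casimir (Benenti)
Stäckel systems, indexed here by `k − 1`:
`Vpot n 0 r = V_r^{(1)} = ρ_r` and
`Vpot n (k+1) r = V_r^{(k+2)} = −V_{r+1}^{(k+1)} + ρ_r V_1^{(k+1)}`.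
(Since `ρ_r = 0` for `r > n`, automatically `V_{n+1}^{(k)} = 0`.) -/
noncomputable def Vpot (n : ℕ) : ℕ → ℕ → (Fin n → ℝ) → ℝ
  | 0, r, x => viete n r x
  | (k + 1), r, x => -Vpot n k (r + 1) x + viete n r x * Vpot n k 1 x

/-- The Viète polynomial in the variables other than `x i`. -/
noncomputable def sig (n r : ℕ) (i : Fin n) (x : Fin n → ℝ) : ℝ :=
  (-1 : ℝ) ^ r * ∑ s ∈ Finset.powersetCard r ((Finset.univ : Finset (Fin n)).erase i),
    ∏ j ∈ s, x j

lemma sig_zero (n : ℕ) (i : Fin n) (x : Fin n → ℝ) : sig n 0 i x = 1 := by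
  simp [sig]

lemma sig_update (n r : ℕ) (i : Fin n) (x : Fin n → ℝ) (t : ℝ) :
    sig n r i (Function.update x i t) = sig n r i x := by
  unfold sig
  congr 1
  refine Finset.sum_congr rfl fun s hs => Finset.prod_congr rfl fun j hj => ?_
  have hji : j ≠ i := by
    have := (Finset.mem_powersetCard.mp hs).1 hj
    exact Finset.ne_of_mem_erase this
  simp [Function.update_of_ne hji]

lemma viete_decomp (n r : ℕ) (i : Fin n) (x : Fin n → ℝ) :
    viete n (r + 1) x = sig n (r + 1) i x - x i * sig n r i x := by
  have huniv : (Finset.univ : Finset (Fin n)) = insert i (Finset.univ.erase i) := by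
    simp
  unfold viete sig
  conv_lhs => rw [huniv, Finset.powersetCard_succ_insert (Finset.notMem_erase i _)]
  rw [Finset.sum_union]
  · rw [Finset.sum_image (fun s hs t ht hst => by
      have hsi : i ∉ s := fun h => (Finset.notMem_erase i _)
        ((Finset.mem_powersetCard.mp hs).1 h)
      have hti : i ∉ t := fun h => (Finset.notMem_erase i _)
        ((Finset.mem_powersetCard.mp ht).1 h)
      rw [← Finset.erase_insert hsi, hst, Finset.erase_insert hti])]
    have : ∀ s ∈ Finset.powersetCard r (Finset.univ.erase i),
        ∏ j ∈ insert i s, x j = x i * ∏ j ∈ s, x j := by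
      intro s hs
      have hsi : i ∉ s := fun h => (Finset.notMem_erase i _)
        ((Finset.mem_powersetCard.mp hs).1 h)
      rw [Finset.prod_insert hsi]
    rw [Finset.sum_congr rfl this, ← Finset.mul_sum, pow_succ]
    ring
  · rw [Finset.disjoint_left]
    intro s hs hs'
    obtain ⟨t, ht, rfl⟩ := Finset.mem_image.mp hs'
    exact (Finset.notMem_erase i _)
      ((Finset.mem_powersetCard.mp hs).1 (Finset.mem_insert_self i t))

lemma viete_diff (n r : ℕ) : Differentiable ℝ (viete n r) := by
  unfold viete
  apply Differentiable.const_mul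
  apply Differentiable.fun_sum
  intro s _
  intro y
  exact (HasFDerivAt.finset_prod (fun j _ =>
    ((differentiable_apply j) y).hasFDerivAt)).differentiableAt

lemma vpot_diff (n k r : ℕ) : Differentiable ℝ (Vpot n k r) := by
  induction k generalizing r with
  | zero => exact viete_diff n r
  | succ k ih =>
    have : Vpot n (k + 1) r = fun y => -Vpot n k (r + 1) y + viete n r y * Vpot n k 1 y := rfl
    rw [this]
    exact (ih (r + 1)).neg.add ((viete_diff n r).mul (ih 1))

lemma fderiv_single_eq_deriv (n : ℕ) (f : (Fin n → ℝ) → ℝ) (x : Fin n → ℝ) (i : Fin n)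
    (hf : DifferentiableAt ℝ f x) :
    fderiv ℝ f x (Pi.single i 1) = deriv (fun t => f (Function.update x i t)) (x i) := by
  have hg := hasDerivAt_update x i (x i)
  have hfd : HasFDerivAt f (fderiv ℝ f x) (Function.update x i (x i)) := by
    rw [Function.update_eq_self]; exact hf.hasFDerivAt
  exact (hfd.comp_hasDerivAt (x i) hg).deriv.symm

lemma fderiv_viete (n r : ℕ) (i : Fin n) (x : Fin n → ℝ) :
    fderiv ℝ (viete n (r + 1)) x (Pi.single i 1) = -sig n r i x := by
  rw [fderiv_single_eq_deriv n _ x i ((viete_diff n (r + 1)).differentiableAt)]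
  have heq : (fun t => viete n (r + 1) (Function.update x i t))
      = fun t => sig n (r + 1) i x - t * sig n r i x := by
    funext t
    rw [viete_decomp n r i, sig_update, sig_update, Function.update_self]
  rw [heq]
  have h : HasDerivAt (fun t : ℝ => sig n (r + 1) i x - t * sig n r i x)
      (-(1 * sig n r i x)) (x i) :=
    ((hasDerivAt_id (x i)).mul_const (sig n r i x)).const_sub (sig n (r + 1) i x)
  rw [h.deriv]
  ring

lemma fderiv_viete_one (n : ℕ) (i : Fin n) (x : Fin n → ℝ) :
    fderiv ℝ (viete n 1) x (Pi.single i 1) = -1 := by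
  have := fderiv_viete n 0 i x
  rwa [sig_zero] at this

/-- The key algebraic identity. -/
lemma key (n r : ℕ) (i : Fin n) (x : Fin n → ℝ) :
    viete n (r + 1) x + fderiv ℝ (viete n (r + 1 + 1)) x (Pi.single i 1)
      = -(fderiv ℝ (viete n (r + 1)) x (Pi.single i 1))
        * (viete n 1 x + fderiv ℝ (viete n (1 + 1)) x (Pi.single i 1)) := by
  rw [fderiv_viete n (r + 1) i x, fderiv_viete n r i x, fderiv_viete n 1 i x,
    viete_decomp n r i x, viete_decomp n 0 i x, sig_zero]
  ring

lemma fderiv_vpot_succ (n k r : ℕ) (i : Fin n) (x : Fin n → ℝ) :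
    fderiv ℝ (Vpot n (k + 1) r) x (Pi.single i 1)
      = -fderiv ℝ (Vpot n k (r + 1)) x (Pi.single i 1)
        + fderiv ℝ (viete n r) x (Pi.single i 1) * Vpot n k 1 x
        + viete n r x * fderiv ℝ (Vpot n k 1) x (Pi.single i 1) := by
  have hA := ((vpot_diff n k (r + 1)) x).hasFDerivAt
  have hB := ((viete_diff n r) x).hasFDerivAt
  have hC := ((vpot_diff n k 1) x).hasFDerivAt
  have h := hA.neg.add (hB.mul hC)
  have heq : Vpot n (k + 1) r = fun y => -Vpot n k (r + 1) y + viete n r y * Vpot n k 1 y := rfl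
  rw [heq, show (fun y => -Vpot n k (r + 1) y + viete n r y * Vpot n k 1 y) = -Vpot n k (r + 1) + viete n r * Vpot n k 1 from rfl, h.fderiv]
  simp only [ContinuousLinearMap.add_apply, ContinuousLinearMap.neg_apply,
    ContinuousLinearMap.smul_apply, smul_eq_mul]
  ring

lemma main_lemma (n k r : ℕ) (i : Fin n) (x : Fin n → ℝ) :
    fderiv ℝ (Vpot n k (r + 1)) x (Pi.single i 1)
      = -(fderiv ℝ (viete n (r + 1)) x (Pi.single i 1))
        * fderiv ℝ (Vpot n k 1) x (Pi.single i 1) := by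
  induction k generalizing r with
  | zero =>
    have h1 : Vpot n 0 (r + 1) = viete n (r + 1) := rfl
    have h2 : Vpot n 0 1 = viete n 1 := rfl
    rw [h1, h2, fderiv_viete_one]
    ring
  | succ k ih =>
    rw [fderiv_vpot_succ n k (r + 1) i x, fderiv_vpot_succ n k 1 i x,
      ih (r + 1), ih 1, fderiv_viete_one]
    have hk := key n r i x
    linear_combination (fderiv ℝ (Vpot n k 1) x (Pi.single i 1)) * hk

/-- every family `{V_1^{(k)},…,V_n^{(k)}}` satisfies the Stäckel
separability conditions `∂_i V_r^{(k)} = v_r^i ∂_i V_1^{(k)}` with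
`v_r^i = −∂ρ_r/∂λ_i`. -/
theorem stmt9 (n : ℕ) :
    ∀ k : ℕ, ∀ r ∈ Finset.Icc 1 n, ∀ i : Fin n, ∀ x : Fin n → ℝ,
      fderiv ℝ (Vpot n k r) x (Pi.single i 1)
        = -(fderiv ℝ (viete n r) x (Pi.single i 1))
            * fderiv ℝ (Vpot n k 1) x (Pi.single i 1) := by
  intro k r hr i x
  obtain ⟨h1, _⟩ := Finset.mem_Icc.mp hr
  obtain ⟨m, rfl⟩ := Nat.exists_eq_add_of_le h1
  rw [add_comm 1 m]
  exact main_lemma n k m i x
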